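/- Let ω be a primitive m-th root of unity and α, β elements of a lattice Q with isometry ν of order m. Define ζ(α) = ζ'(α)·2^{⟨α,ν^{m/2}α⟩/2} if m is even and ζ(α) = ζ'(α) if m is odd, where ζ'(α) = ∏_{0<p<m/2} (1 − ω^p)^{⟨α,ν^p α⟩}, and define ε'(α,β) = ∏_{−m/2<p<0} (−ω^p)^{⟨α,ν^p β⟩}. Then ζ(α)ζ(β) ε'(α, ν^r β)^{−1} ζ(α + ν^r β)^{−1} = ∏_{0<p<m} (1 − ω^p)^{−⟨α, ν^{p+r} β⟩} for all r ∈ ℤ_m. -/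

import Mathlib

open Finset

/-- The standard bilinear form on `ℤ^N`. -/
def form {N : ℕ} (α β : Fin N → ℤ) : ℤ := ∑ k, α k * β k

/-- `ζ(α) = ζ'(α)·2^{⟨α,ν^{m/2}α⟩/2}` when `m` is even and `ζ(α) = ζ'(α)` when `m` is
odd, where `ζ'(α) = ∏_{0<p<m/2}(1 − ω^p)^{⟨α,ν^pα⟩}`. -/
noncomputable def zeta (N m : ℕ) (ω : ℂ) (ν : AddAut (Fin N → ℤ))
    (α : Fin N → ℤ) : ℂ :=
  (∏ p ∈ (Finset.range m).filter (fun p => 0 < p ∧ 2 * p < m),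
      (1 - ω ^ p) ^ form α ((p • ν) α)) *
    (if Even m then (2 : ℂ) ^ (form α (((m / 2) • ν) α) / 2) else 1)

/-- `ε'(α,β) = ∏_{−m/2<p<0} (−ω^p)^{⟨α,ν^pβ⟩}`. -/
noncomputable def epsPrime (N m : ℕ) (ω : ℂ) (ν : AddAut (Fin N → ℤ))
    (α β : Fin N → ℤ) : ℂ :=
  ∏ p ∈ (Finset.range m).filter (fun p => 0 < p ∧ 2 * p < m),
    (-ω ^ (-(p : ℤ))) ^ form α (((-(p : ℤ)) • ν) β)

/-- Auxiliary: splitting a product over `Ioo 0 m` into the lower half, the reflected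
upper half and (for even `m`) the middle term. -/
lemma prod_Ioo_split_aux (m : ℕ) (hm : 0 < m) (F : ℕ → ℂ) :
    ∏ p ∈ Finset.Ioo 0 m, F p =
      (∏ p ∈ (Finset.range m).filter (fun p => 0 < p ∧ 2 * p < m), F p * F (m - p)) *
      (if Even m then F (m / 2) else 1) := by
  classical
  set S := (Finset.range m).filter (fun p => 0 < p ∧ 2 * p < m) with hS
  set S' := (Finset.range m).filter (fun p => 0 < p ∧ m < 2 * p) with hS'
  set T := (Finset.range m).filter (fun p => 0 < p ∧ 2 * p = m) with hT
  have hsplit : Finset.Ioo 0 m = (S ∪ S') ∪ T := by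
    ext p
    simp only [Finset.mem_Ioo, hS, hS', hT, Finset.mem_union, Finset.mem_filter,
      Finset.mem_range]
    omega
  have hd1 : Disjoint S S' := by
    rw [Finset.disjoint_left]; intro a ha ha'
    simp only [hS, hS', Finset.mem_filter, Finset.mem_range] at ha ha'; omega
  have hd2 : Disjoint (S ∪ S') T := by
    rw [Finset.disjoint_left]; intro a ha ha'
    simp only [hS, hS', hT, Finset.mem_union, Finset.mem_filter, Finset.mem_range] at ha ha'
    omega
  rw [hsplit, Finset.prod_union hd2, Finset.prod_union hd1, Finset.prod_mul_distrib]
  congr 1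
  · congr 1
    refine Finset.prod_nbij' (fun q => m - q) (fun p => m - p) ?_ ?_ ?_ ?_ ?_
    · intro a ha; simp only [hS, hS', Finset.mem_filter, Finset.mem_range] at *; omega
    · intro a ha; simp only [hS, hS', Finset.mem_filter, Finset.mem_range] at *; omega
    · intro a ha; simp only [hS', Finset.mem_filter, Finset.mem_range] at ha; omega
    · intro a ha; simp only [hS, Finset.mem_filter, Finset.mem_range] at ha; omega
    · intro a ha
      simp only [hS', Finset.mem_filter, Finset.mem_range] at ha
      congr 1
      omega
  · by_cases h : Even m
    · have : T = {m / 2} := by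
        ext p
        simp only [hT, Finset.mem_filter, Finset.mem_range, Finset.mem_singleton]
        obtain ⟨k, hk⟩ := h
        omega
      rw [this, if_pos h, Finset.prod_singleton]
    · have : T = ∅ := by
        ext p
        simp only [hT, Finset.mem_filter, Finset.mem_range, Finset.notMem_empty, iff_false]
        rintro ⟨h1, h2⟩
        exact h ⟨p, by omega⟩
      rw [this, if_neg h, Finset.prod_empty]

/-- Auxiliary `zpow` arithmetic for the factorwise identity. -/
lemma zpow_helper_aux (c d : ℂ) (hc : c ≠ 0) (hd : d ≠ 0) (a b u v : ℤ) :
    c ^ a * c ^ b * (d ^ v)⁻¹ * (c ^ (a + b + (u + v)))⁻¹ = c ^ (-u) * (d * c) ^ (-v) := by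
  have h1 : c ^ a ≠ 0 := zpow_ne_zero a hc
  have h2 : c ^ b ≠ 0 := zpow_ne_zero b hc
  have h3 : c ^ u ≠ 0 := zpow_ne_zero u hc
  have h4 : c ^ v ≠ 0 := zpow_ne_zero v hc
  have h5 : d ^ v ≠ 0 := zpow_ne_zero v hd
  rw [mul_zpow, zpow_add₀ hc, zpow_add₀ hc, zpow_add₀ hc, zpow_neg c, zpow_neg c, zpow_neg d]
  field_simp

/-- Lemma 5.4 (eq. (4.7)):
`ζ(α)ζ(β) ε'(α,ν^rβ)⁻¹ ζ(α+ν^rβ)⁻¹ = ∏_{0<p<m} (1 − ω^p)^{−⟨α,ν^{p+r}β⟩}`. -/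
theorem zeta_epsPrime_identity (N m : ℕ) (hm : 0 < m) (ω : ℂ)
    (hω : IsPrimitiveRoot ω m)
    (Q : AddSubgroup (Fin N → ℤ))
    (hQeven : ∀ α ∈ Q, Even (form α α))
    (ν : AddAut (Fin N → ℤ))
    (hiso : ∀ α β, form (ν α) (ν β) = form α β)
    (hνQ : ∀ α ∈ Q, ν α ∈ Q)
    (hord : m • ν = 0)
    (hA5 : Even m → ∀ α ∈ Q, Even (form (((m / 2) • ν) α) α))
    (α : Fin N → ℤ) (hα : α ∈ Q) (β : Fin N → ℤ) (hβ : β ∈ Q) (r : ℕ) (hr : r < m) :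
    zeta N m ω ν α * zeta N m ω ν β * (epsPrime N m ω ν α ((r • ν) β))⁻¹ *
        (zeta N m ω ν (α + (r • ν) β))⁻¹
      = ∏ p ∈ Finset.Ioo 0 m, (1 - ω ^ p) ^ (-(form α (((p + r) • ν) β))) := by
  classical
  have hωne : ω ≠ 0 := hω.ne_zero hm.ne'
  have hmz : ω ^ m = 1 := hω.pow_eq_one
  have hne : ∀ p : ℕ, 0 < p → p < m → (1 : ℂ) - ω ^ p ≠ 0 := fun p h1 h2 =>
    sub_ne_zero.mpr (Ne.symm (hω.pow_ne_one_of_pos_of_lt h1.ne' h2))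
  have hdne : ∀ p : ℕ, (-(ω ^ (-(p : ℤ))) : ℂ) ≠ 0 := fun p =>
    neg_ne_zero.mpr (zpow_ne_zero _ hωne)
  -- form basics
  have fcomm : ∀ a b : Fin N → ℤ, form a b = form b a := by
    intro a b; simp [form, mul_comm]
  have faddl : ∀ a b c : Fin N → ℤ, form (a + b) c = form a c + form b c := by
    intro a b c; simp [form, add_mul, Finset.sum_add_distrib]
  have faddr : ∀ a b c : Fin N → ℤ, form a (b + c) = form a b + form a c := by
    intro a b c; simp [form, mul_add, Finset.sum_add_distrib]
  -- isometry for integer powers of ν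
  have hisoz : ∀ (j : ℤ) (a b : Fin N → ℤ), form ((j • ν) a) ((j • ν) b) = form a b := by
    have hinv : ∀ a b : Fin N → ℤ, form ((-ν) a) ((-ν) b) = form a b := by
      intro a b
      have h := hiso ((-ν) a) ((-ν) b)
      simpa using h.symm
    intro j
    induction j using Int.induction_on with
    | zero => simp
    | succ i ih =>
      intro a b
      have e : ∀ x : Fin N → ℤ, (((i : ℤ) + 1) • ν) x = ((i : ℤ) • ν) (ν x) := by
        intro x; rw [add_zsmul, one_zsmul]; rfl
      rw [e, e, ih, hiso]
    | pred i ih =>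
      intro a b
      have e : ∀ x : Fin N → ℤ, ((-(i : ℤ) - 1) • ν) x = ((-(i : ℤ)) • ν) ((-ν) x) := by
        intro x; rw [sub_eq_add_neg, add_zsmul, neg_one_zsmul]; rfl
      rw [e, e, ih, hinv]
  have hcomp : ∀ (j k : ℤ) (x : Fin N → ℤ), ((j + k) • ν) x = (j • ν) ((k • ν) x) := by
    intro j k x; rw [add_zsmul]; rfl
  have hnatz : ∀ (p : ℕ) (x : Fin N → ℤ), (p • ν) x = ((p : ℤ) • ν) x := by
    intro p x; rw [natCast_zsmul]
  have hshift : ∀ (j k : ℤ) (a b : Fin N → ℤ),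
      form ((j • ν) a) ((k • ν) b) = form a (((k - j) • ν) b) := by
    intro j k a b
    have h : (k • ν) b = (j • ν) (((k - j) • ν) b) := by
      rw [← hcomp]; congr 1; ring
    rw [h, hisoz]
  have hswap : ∀ (k : ℤ) (a b : Fin N → ℤ), form ((k • ν) a) b = form a (((-k) • ν) b) := by
    intro k a b
    have h := hshift k 0 a b
    simpa using h
  set g : ℤ → ℤ := fun k => form α ((k • ν) β) with hgdef
  have hord' : (m : ℤ) • ν = 0 := by rw [natCast_zsmul, hord]
  have hper : ∀ k : ℤ, g (k + m) = g k := by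
    intro k
    simp only [hgdef]
    rw [hcomp k m, hord']
    rfl
  -- the argument of the ε' factors
  have epsarg : ∀ p : ℕ, form α (((-(p : ℤ)) • ν) ((r • ν) β)) = g ((r : ℤ) - p) := by
    intro p
    rw [hnatz r, ← hcomp]
    show g (-(p : ℤ) + r) = g ((r : ℤ) - p)
    congr 1; ring
  -- natural powers in terms of g
  have hgen : ∀ q : ℕ, form α (((q + r) • ν) β) = g ((q : ℤ) + r) := by
    intro q
    rw [hnatz]
    have hc : ((q + r : ℕ) : ℤ) = (q : ℤ) + r := by push_cast; ring
    show g (((q + r : ℕ) : ℤ)) = g ((q : ℤ) + r)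
    rw [hc]
  -- the quadratic expansion
  have hsum : ∀ p : ℕ, form (α + (r • ν) β) ((p • ν) (α + (r • ν) β)) =
      form α ((p • ν) α) + form β ((p • ν) β) + (g ((p : ℤ) + r) + g ((r : ℤ) - p)) := by
    intro p
    have hmap : (p • ν) (α + (r • ν) β) = (p • ν) α + (p • ν) ((r • ν) β) :=
      map_add (p • ν) _ _
    rw [hmap, faddl, faddr, faddr]
    have e1 : (p • ν) ((r • ν) β) = (((p : ℤ) + r) • ν) β := by
      rw [hcomp, ← hnatz, ← hnatz]
    have t2 : form α ((p • ν) ((r • ν) β)) = g ((p : ℤ) + r) := by rw [e1]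
    have t3 : form ((r • ν) β) ((p • ν) α) = g ((r : ℤ) - p) := by
      rw [fcomm, hnatz p, hswap]
      rw [hnatz r, ← hcomp]
      show g (-(p : ℤ) + r) = g ((r : ℤ) - p)
      congr 1; ring
    have t4 : form ((r • ν) β) ((p • ν) ((r • ν) β)) = form β ((p • ν) β) := by
      rw [e1, hnatz r, hshift, hnatz p]
      congr 2
      ring
    rw [t2, t3, t4]
    ring
  -- base change for the reflected factors
  have hbase : ∀ p : ℕ, 0 < p → p < m →
      (1 - ω ^ (m - p) : ℂ) = (-(ω ^ (-(p : ℤ)))) * (1 - ω ^ p) := by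
    intro p h1 h2
    have e : (ω ^ (m - p) : ℂ) = ω ^ (-(p : ℤ)) := by
      rw [← zpow_natCast, show ((m - p : ℕ) : ℤ) = (m : ℤ) + -(p : ℤ) by omega,
        zpow_add₀ hωne, zpow_natCast, hmz, one_mul]
    have h1' : ω ^ (-(p : ℤ)) * ω ^ (p : ℤ) = 1 := by
      rw [← zpow_add₀ hωne]; simp
    have h2' : (ω : ℂ) ^ p = ω ^ (p : ℤ) := (zpow_natCast ω p).symm
    rw [e, h2']
    linear_combination -h1'
  -- reduction of both sides to a common middle expression
  have key : zeta N m ω ν α * zeta N m ω ν β * (epsPrime N m ω ν α ((r • ν) β))⁻¹ *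
        (zeta N m ω ν (α + (r • ν) β))⁻¹
      = (∏ p ∈ (Finset.range m).filter (fun p => 0 < p ∧ 2 * p < m),
          (1 - ω ^ p) ^ (-(g ((p : ℤ) + r))) *
            ((-(ω ^ (-(p : ℤ)))) * (1 - ω ^ p)) ^ (-(g ((r : ℤ) - p)))) *
        (if Even m then (2 : ℂ) ^ (-(g (((m / 2 : ℕ) : ℤ) + r))) else 1) := by
    simp only [zeta, epsPrime]
    set E1 := (if Even m then (2 : ℂ) ^ (form α (((m / 2) • ν) α) / 2) else 1) with hE1
    set E2 := (if Even m then (2 : ℂ) ^ (form β (((m / 2) • ν) β) / 2) else 1) with hE2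
    set E4 := (if Even m then
      (2 : ℂ) ^ (form (α + (r • ν) β) (((m / 2) • ν) (α + (r • ν) β)) / 2) else 1) with hE4
    set P1 := ∏ p ∈ (Finset.range m).filter (fun p => 0 < p ∧ 2 * p < m),
      (1 - ω ^ p) ^ form α ((p • ν) α) with hP1
    set P2 := ∏ p ∈ (Finset.range m).filter (fun p => 0 < p ∧ 2 * p < m),
      (1 - ω ^ p) ^ form β ((p • ν) β) with hP2
    set P3 := ∏ p ∈ (Finset.range m).filter (fun p => 0 < p ∧ 2 * p < m),
      (-ω ^ (-(p : ℤ))) ^ form α (((-(p : ℤ)) • ν) ((r • ν) β)) with hP3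
    set P4 := ∏ p ∈ (Finset.range m).filter (fun p => 0 < p ∧ 2 * p < m),
      (1 - ω ^ p) ^ form (α + (r • ν) β) ((p • ν) (α + (r • ν) β)) with hP4
    rw [show P1 * E1 * (P2 * E2) * P3⁻¹ * (P4 * E4)⁻¹
        = (P1 * P2 * P3⁻¹ * P4⁻¹) * (E1 * E2 * E4⁻¹) by ring]
    congr 1
    · rw [hP1, hP2, hP3, hP4, ← Finset.prod_inv_distrib, ← Finset.prod_inv_distrib,
        ← Finset.prod_mul_distrib, ← Finset.prod_mul_distrib, ← Finset.prod_mul_distrib]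
      apply Finset.prod_congr rfl
      intro p hp
      simp only [Finset.mem_filter, Finset.mem_range] at hp
      obtain ⟨hpm, hp0, hp2⟩ := hp
      rw [hsum p, epsarg p]
      exact zpow_helper_aux _ _ (hne p hp0 hpm) (hdne p) _ _ _ _
    · rw [hE1, hE2, hE4]
      by_cases hEm : Even m
      · simp only [if_pos hEm]
        obtain ⟨a', ha'⟩ : Even (form α (((m / 2) • ν) α)) := by
          have h := hA5 hEm α hα; rwa [fcomm] at h
        obtain ⟨b', hb'⟩ : Even (form β (((m / 2) • ν) β)) := by
          have h := hA5 hEm β hβ; rwa [fcomm] at h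
        have harg : g ((r : ℤ) - (m / 2 : ℕ)) = g (((m / 2 : ℕ) : ℤ) + r) := by
          rw [← hper ((r : ℤ) - (m / 2 : ℕ))]
          congr 1
          obtain ⟨t, ht⟩ := hEm
          omega
        rw [hsum (m / 2), harg, ha', hb']
        rw [show (a' + a') / 2 = a' by omega, show (b' + b') / 2 = b' by omega,
          show (a' + a' + (b' + b')
              + (g (((m / 2 : ℕ) : ℤ) + r) + g (((m / 2 : ℕ) : ℤ) + r))) / 2
            = a' + b' + g (((m / 2 : ℕ) : ℤ) + r) by omega]
        rw [← zpow_neg, ← zpow_add₀ (two_ne_zero), ← zpow_add₀ (two_ne_zero)]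
        congr 1
        ring
      · simp only [if_neg hEm]; norm_num
  rw [key, prod_Ioo_split_aux m hm]
  congr 1
  · apply Finset.prod_congr rfl
    intro p hp
    simp only [Finset.mem_filter, Finset.mem_range] at hp
    obtain ⟨hp2, hp1, hp3⟩ := hp
    have e1 : form α (((p + r) • ν) β) = g ((p : ℤ) + r) := hgen p
    have e2 : form α (((m - p + r) • ν) β) = g ((r : ℤ) - p) := by
      rw [hgen (m - p), show ((m - p : ℕ) : ℤ) + r = ((r : ℤ) - p) + m by omega, hper]
    rw [e1, e2, hbase p hp1 hp2]
  · by_cases hEm : Even m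
    · rw [if_pos hEm, if_pos hEm]
      have h1 : 0 < m / 2 := by obtain ⟨t, ht⟩ := hEm; omega
      have h2 : m / 2 < m := by omega
      have hbase2 : (1 - ω ^ (m / 2) : ℂ) = 2 := by
        have hsq : ((ω ^ (m / 2) : ℂ)) ^ 2 = 1 := by
          rw [← pow_mul, show m / 2 * 2 = m by obtain ⟨t, ht⟩ := hEm; omega, hmz]
        have hd : ((ω ^ (m / 2) : ℂ) - 1) * (ω ^ (m / 2) + 1) = 0 := by
          linear_combination hsq
        rcases mul_eq_zero.mp hd with h | h
        · exact absurd (by linear_combination h)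
            (hω.pow_ne_one_of_pos_of_lt h1.ne' h2)
        · have : (ω ^ (m / 2) : ℂ) = -1 := by linear_combination h
          rw [this]; norm_num
      rw [hbase2, hgen (m / 2)]
    · rw [if_neg hEm, if_neg hEm]
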